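/- If P ⊆ ℝ^d is a 0/1-polytope with at least two vertices that has fractional wall-matchings, then h(G(P)) ≥ 1. -/

import Mathlib

open scoped Classical

noncomputable section

/-- The number of edges of `G` leaving the set `S`, counted as ordered pairs
`(u, v)` with `u ∈ S`, `v ∉ S` and `u ~ v` (each cut edge is counted once). -/
def cutCard {V : Type*} [Fintype V] (G : SimpleGraph V) (S : Set V) : ℕ :=
  {p : V × V | p.1 ∈ S ∧ p.2 ∉ S ∧ G.Adj p.1 p.2}.ncard

/-- The edge expansion `h(G)` of a finite graph: the infimum of `|δ(S)|/|S|`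
over all nonempty `S` with `|S| ≤ |V|/2`. -/
noncomputable def edgeExpansion {V : Type*} [Fintype V] (G : SimpleGraph V) : ℝ :=
  sInf { r : ℝ | ∃ S : Set V, S.Nonempty ∧ 2 * S.ncard ≤ Fintype.card V ∧
    r = (cutCard G S : ℝ) / (S.ncard : ℝ) }
/-- All points of `X` are 0/1-vectors. -/
def IsZeroOne {ι : Type*} (X : Finset (ι → ℝ)) : Prop :=
  ∀ x ∈ X, ∀ i, x i = 0 ∨ x i = 1

/-- Two vertices `u v` of the 0/1-polytope `P = conv X` are adjacent iff they are
distinct and there is a linear functional whose maximum over `P` is attained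
exactly on the segment `[u, v]`. -/
def PolytopeAdj {ι : Type*} [Fintype ι] (X : Finset (ι → ℝ)) (u v : ι → ℝ) : Prop :=
  u ∈ X ∧ v ∈ X ∧ u ≠ v ∧ ∃ (f : (ι → ℝ) →ₗ[ℝ] ℝ) (c : ℝ),
    (∀ x ∈ convexHull ℝ (X : Set (ι → ℝ)), f x ≤ c) ∧
    {x ∈ convexHull ℝ (X : Set (ι → ℝ)) | f x = c} = segment ℝ u v

/-- The graph `G(P)` of the 0/1-polytope `P = conv X`, on the vertex set `X`. -/
def polytopeGraph {ι : Type*} [Fintype ι] (X : Finset (ι → ℝ)) :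
    SimpleGraph {x // x ∈ X} where
  Adj u v := PolytopeAdj X u.1 v.1
  symm := by
    constructor
    rintro u v ⟨hu, hv, hne, f, c, h1, h2⟩
    exact ⟨hv, hu, hne.symm, f, c, h1, by rw [h2, segment_symm]⟩
  loopless := by constructor; rintro u ⟨_, _, hne, _⟩; exact hne rfl
/-- A wall of the 0/1-polytope with vertex set `X`: a nonempty set of vertices
obtained by intersecting `X` with a face of the 0/1-cube, given by a sign vector
`σ ∈ {0,1,⋆}^ι` (encoded as `ι → Option Bool`, `none` being `⋆`). -/
def IsWall {ι : Type*} (X : Finset (ι → ℝ)) (W : Set (ι → ℝ)) : Prop :=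
  W.Nonempty ∧ ∃ σ : ι → Option Bool,
    W = {x | x ∈ X ∧ ∀ i, ∀ b, σ i = some b → x i = (if b then (1 : ℝ) else 0)}

/-- `σ(W)ᵢ = ⋆`, i.e. the points of `W` do not all agree in coordinate `i`. -/
def IsStarCoord {ι : Type*} (W : Set (ι → ℝ)) (i : ι) : Prop :=
  ∃ x ∈ W, ∃ y ∈ W, x i ≠ y i
/-- `μ` is the smallest coordinate in which the points of `W` disagree,
i.e. `μ = μ(W)`. -/
def IsLeastStar {ι : Type*} [LinearOrder ι] (W : Set (ι → ℝ)) (μ : ι) : Prop :=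
  IsStarCoord W μ ∧ ∀ j, j < μ → ¬ IsStarCoord W j

/-- `(u, v)` is an edge of the bipartite graph `B(W)` (with `μ = μ(W)`),
oriented from the part `W₀` to the part `W₁`. -/
def WallBipAdj {ι : Type*} [Fintype ι] (X : Finset (ι → ℝ)) (W : Set (ι → ℝ))
    (μ : ι) (u v : ι → ℝ) : Prop :=
  PolytopeAdj X u v ∧ u ∈ W ∧ v ∈ W ∧ u μ = 0 ∧ v μ = 1

/-- The bipartite graph `B(W)` (with `μ = μ(W)`, parts `W₀` and `W₁`) has a
fractional matching: nonnegative weights on its edges such that every node of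
`W₀` has weighted degree `1/|W₀|` and every node of `W₁` has weighted degree
`1/|W₁|`. -/
def HasFracMatching {ι : Type*} [Fintype ι] (X : Finset (ι → ℝ)) (W : Set (ι → ℝ))
    (μ : ι) : Prop :=
  ∃ w : (ι → ℝ) → (ι → ℝ) → ℚ,
    (∀ u v, 0 ≤ w u v) ∧
    (∀ u v, w u v ≠ 0 → WallBipAdj X W μ u v) ∧
    (∀ u ∈ W, u μ = 0 → ∑ v ∈ X, w u v = 1 / ({x ∈ W | x μ = 0}.ncard : ℚ)) ∧
    (∀ v ∈ W, v μ = 1 → ∑ u ∈ X, w u v = 1 / ({x ∈ W | x μ = 1}.ncard : ℚ))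

/-- The 0/1-polytope with vertex set `X` has fractional wall-matchings: for every
wall `W` with at least two points (equivalently, with a least star coordinate
`μ(W)`), the bipartite graph `B(W)` has a fractional matching. -/
def HasFractionalWallMatchings {ι : Type*} [Fintype ι] [LinearOrder ι]
    (X : Finset (ι → ℝ)) : Prop :=
  ∀ W : Set (ι → ℝ), IsWall X W → ∀ μ : ι, IsLeastStar W μ → HasFracMatching X W μ

section Aux

variable {d : ℕ}

lemma key_arith (a b n0 n1 e0 e1 ec : ℚ)
    (hn0 : 1 ≤ n0) (hn1 : 1 ≤ n1)
    (ha : 0 ≤ a) (hb : 0 ≤ b)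
    (hs : 2 * (a + b) ≤ n0 + n1)
    (he0 : min a (n0 - a) ≤ e0) (he1 : min b (n1 - b) ≤ e1)
    (hec : 0 ≤ ec)
    (h1 : a * n1 - b * n0 ≤ ec * n0) (h2 : a * n1 - b * n0 ≤ ec * n1)
    (h3 : b * n0 - a * n1 ≤ ec * n0) (h4 : b * n0 - a * n1 ≤ ec * n1) :
    a + b ≤ e0 + e1 + ec := by
  rcases le_or_gt (2 * a) n0 with hA | hA <;> rcases le_or_gt (2 * b) n1 with hB | hB
  · rw [min_eq_left (by linarith)] at he0
    rw [min_eq_left (by linarith)] at he1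
    linarith
  · -- 2a ≤ n0, 2b > n1
    rw [min_eq_left (by linarith)] at he0
    rw [min_eq_right (by linarith)] at he1
    rcases le_total n0 n1 with h | h
    · nlinarith [mul_nonneg (sub_nonneg.2 h) (by linarith : (0:ℚ) ≤ 2*b - n1), h3]
    · nlinarith [mul_nonneg (sub_nonneg.2 h) (by linarith : (0:ℚ) ≤ 2*b - n1), h4]
  · -- 2a > n0, 2b ≤ n1
    rw [min_eq_right (by linarith)] at he0
    rw [min_eq_left (by linarith)] at he1
    rcases le_total n0 n1 with h | h
    · nlinarith [mul_nonneg (sub_nonneg.2 h) (by linarith : (0:ℚ) ≤ 2*a - n0), h2]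
    · nlinarith [mul_nonneg (sub_nonneg.2 h) (by linarith : (0:ℚ) ≤ 2*a - n0), h1]
  · linarith


lemma polytopeAdj_symm {X : Finset (Fin d → ℝ)} {u v : Fin d → ℝ}
    (h : PolytopeAdj X u v) : PolytopeAdj X v u := by
  obtain ⟨hu, hv, hne, f, c, h1, h2⟩ := h
  exact ⟨hv, hu, hne.symm, f, c, h1, by rw [h2, segment_symm]⟩

/-- The set of ordered adjacent pairs from `S` to `T`. -/
def pairSet (X : Finset (Fin d → ℝ)) (S T : Set (Fin d → ℝ)) :
    Set ((Fin d → ℝ) × (Fin d → ℝ)) :=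
  {p | p.1 ∈ S ∧ p.2 ∈ T ∧ PolytopeAdj X p.1 p.2}

lemma pairSet_finite (X : Finset (Fin d → ℝ)) (S T : Set (Fin d → ℝ)) :
    (pairSet X S T).Finite := by
  apply Set.Finite.subset (X.finite_toSet.prod X.finite_toSet)
  rintro ⟨u, v⟩ ⟨_, _, hu, hv, _⟩
  exact ⟨hu, hv⟩

def epairs (X : Finset (Fin d → ℝ)) (S T : Set (Fin d → ℝ)) : ℕ :=
  (pairSet X S T).ncard

lemma epairs_comm (X : Finset (Fin d → ℝ)) (S T : Set (Fin d → ℝ)) :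
    epairs X S T = epairs X T S := by
  unfold epairs
  have : pairSet X T S = Prod.swap '' pairSet X S T := by
    ext ⟨u, v⟩
    constructor
    · rintro ⟨h1, h2, h3⟩
      exact ⟨(v, u), ⟨h2, h1, polytopeAdj_symm h3⟩, rfl⟩
    · rintro ⟨⟨x, y⟩, ⟨h1, h2, h3⟩, heq⟩
      rw [Prod.ext_iff] at heq
      obtain ⟨e1, e2⟩ := heq
      simp only [Prod.fst_swap, Prod.snd_swap] at e1 e2
      subst e1; subst e2
      exact ⟨h2, h1, polytopeAdj_symm h3⟩
  rw [this, Set.ncard_image_of_injective _ Prod.swap_injective]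

lemma epairs_union_left {X : Finset (Fin d → ℝ)} {S₁ S₂ T : Set (Fin d → ℝ)}
    (h : Disjoint S₁ S₂) :
    epairs X (S₁ ∪ S₂) T = epairs X S₁ T + epairs X S₂ T := by
  unfold epairs
  have hset : pairSet X (S₁ ∪ S₂) T = pairSet X S₁ T ∪ pairSet X S₂ T := by
    ext ⟨u, v⟩; simp only [pairSet, Set.mem_setOf_eq, Set.mem_union]; tauto
  rw [hset, Set.ncard_union_eq _ (pairSet_finite X S₁ T) (pairSet_finite X S₂ T)]
  rw [Set.disjoint_left]
  rintro ⟨u, v⟩ ⟨h1, _, _⟩ ⟨h2, _, _⟩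
  exact Set.disjoint_left.1 h h1 h2

lemma epairs_union_right {X : Finset (Fin d → ℝ)} {S T₁ T₂ : Set (Fin d → ℝ)}
    (h : Disjoint T₁ T₂) :
    epairs X S (T₁ ∪ T₂) = epairs X S T₁ + epairs X S T₂ := by
  unfold epairs
  have hset : pairSet X S (T₁ ∪ T₂) = pairSet X S T₁ ∪ pairSet X S T₂ := by
    ext ⟨u, v⟩; simp only [pairSet, Set.mem_setOf_eq, Set.mem_union]; tauto
  rw [hset, Set.ncard_union_eq _ (pairSet_finite X S T₁) (pairSet_finite X S T₂)]
  rw [Set.disjoint_left]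
  rintro ⟨u, v⟩ ⟨_, h1, _⟩ ⟨_, h2, _⟩
  exact Set.disjoint_left.1 h h1 h2

lemma wall_subset {X : Finset (Fin d → ℝ)} {W : Set (Fin d → ℝ)} (hW : IsWall X W) :
    W ⊆ ↑X := by
  obtain ⟨-, σ, rfl⟩ := hW
  intro x hx
  exact hx.1

lemma exists_leastStar {X : Finset (Fin d → ℝ)} {W : Set (Fin d → ℝ)} (hW : IsWall X W)
    (h2 : 1 < W.ncard) : ∃ μ : Fin d, IsLeastStar W μ := by
  have hfin : W.Finite := (X.finite_toSet).subset (wall_subset hW)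
  obtain ⟨x, y, hx, hy, hxy⟩ := (Set.one_lt_ncard_iff hfin).1 h2
  obtain ⟨i, hi⟩ := Function.ne_iff.1 hxy
  have hne : {j : Fin d | IsStarCoord W j}.Nonempty := ⟨i, x, hx, y, hy, hi⟩
  obtain ⟨μ, hμ, hmin⟩ := (wellFounded_lt (α := Fin d)).has_min _ hne
  exact ⟨μ, hμ, fun j hj hjs => hmin j hjs hj⟩

lemma star_mem_01 {X : Finset (Fin d → ℝ)} (hX01 : IsZeroOne X) {W : Set (Fin d → ℝ)}
    (hW : IsWall X W) {μ : Fin d} (hμ : IsStarCoord W μ) :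
    (∃ x ∈ W, x μ = 0) ∧ (∃ x ∈ W, x μ = 1) := by
  obtain ⟨x, hx, y, hy, hxy⟩ := hμ
  have hx01 := hX01 x (wall_subset hW hx) μ
  have hy01 := hX01 y (wall_subset hW hy) μ
  rcases hx01 with h | h <;> rcases hy01 with h' | h'
  · exact absurd (h.trans h'.symm) hxy
  · exact ⟨⟨x, hx, h⟩, ⟨y, hy, h'⟩⟩
  · exact ⟨⟨y, hy, h'⟩, ⟨x, hx, h⟩⟩
  · exact absurd (h.trans h'.symm) hxy

lemma subwall {X : Finset (Fin d → ℝ)} (hX01 : IsZeroOne X) {W : Set (Fin d → ℝ)}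
    (hW : IsWall X W) {μ : Fin d} (hμ : IsStarCoord W μ) (b : Bool) :
    IsWall X {x ∈ W | x μ = (if b then (1:ℝ) else 0)} := by
  obtain ⟨hne, σ, hσ⟩ := hW
  have hσμ : σ μ = none := by
    rcases h : σ μ with - | c
    · rfl
    · exfalso
      obtain ⟨x, hx, y, hy, hxy⟩ := hμ
      rw [hσ] at hx hy
      rw [hx.2 μ c h, hy.2 μ c h] at hxy
      exact hxy rfl
  constructor
  · obtain ⟨⟨x0, hx0, hx0v⟩, ⟨x1, hx1, hx1v⟩⟩ := star_mem_01 hX01 ⟨hne, σ, hσ⟩ hμ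
    cases b
    · exact ⟨x0, hx0, by simpa using hx0v⟩
    · exact ⟨x1, hx1, by simpa using hx1v⟩
  · refine ⟨Function.update σ μ (some b), ?_⟩
    ext x
    simp only [Set.mem_setOf_eq]
    constructor
    · rintro ⟨hxW, hxμ⟩
      have hxX : x ∈ X := by rw [hσ] at hxW; exact hxW.1
      refine ⟨hxX, fun i c hc => ?_⟩
      rcases eq_or_ne i μ with rfl | hiμ
      · rw [Function.update_self] at hc
        rw [← Option.some_inj.1 hc]; exact hxμ
      · rw [Function.update_of_ne hiμ] at hc
        rw [hσ] at hxW; exact hxW.2 i c hc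
    · rintro ⟨hxX, hcon⟩
      constructor
      · rw [hσ]
        refine ⟨hxX, fun i c hc => ?_⟩
        rcases eq_or_ne i μ with rfl | hiμ
        · rw [hσμ] at hc; exact absurd hc (by simp)
        · exact hcon i c (by rwa [Function.update_of_ne hiμ])
      · exact hcon μ b (Function.update_self μ (some b) σ)

lemma cross_bound {X : Finset (Fin d → ℝ)} {W : Set (Fin d → ℝ)} {μ : Fin d}
    (w : (Fin d → ℝ) → (Fin d → ℝ) → ℚ)
    (hpos : ∀ u v, 0 ≤ w u v)
    (hsupp : ∀ u v, w u v ≠ 0 → WallBipAdj X W μ u v)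
    (hrow : ∀ u ∈ W, u μ = 0 → ∑ v ∈ X, w u v = 1 / ({x ∈ W | x μ = 0}.ncard : ℚ))
    (hcol : ∀ v ∈ W, v μ = 1 → ∑ u ∈ X, w u v = 1 / ({x ∈ W | x μ = 1}.ncard : ℚ))
    (hWX : W ⊆ ↑X)
    (hW0 : {x ∈ W | x μ = 0}.Nonempty) (hW1 : {x ∈ W | x μ = 1}.Nonempty)
    {A B : Set (Fin d → ℝ)} (hA : A ⊆ {x ∈ W | x μ = 0}) (hB : B ⊆ {x ∈ W | x μ = 1}) :
    ((A.ncard : ℚ) * {x ∈ W | x μ = 1}.ncard - B.ncard * {x ∈ W | x μ = 0}.ncard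
      ≤ (epairs X A ({x ∈ W | x μ = 1} \ B)) * ({x ∈ W | x μ = 1}.ncard : ℚ)) ∧
    ((A.ncard : ℚ) * {x ∈ W | x μ = 1}.ncard - B.ncard * {x ∈ W | x μ = 0}.ncard
      ≤ (epairs X A ({x ∈ W | x μ = 1} \ B)) * ({x ∈ W | x μ = 0}.ncard : ℚ)) := by
  classical
  set W0 : Set (Fin d → ℝ) := {x ∈ W | x μ = 0} with hW0def
  set W1 : Set (Fin d → ℝ) := {x ∈ W | x μ = 1} with hW1def
  have hfinW : W.Finite := (X.finite_toSet).subset hWX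
  have hfinW0 : W0.Finite := hfinW.subset (fun x hx => hx.1)
  have hfinW1 : W1.Finite := hfinW.subset (fun x hx => hx.1)
  have hfinA : A.Finite := hfinW0.subset hA
  have hfinB : B.Finite := hfinW1.subset hB
  set n0 : ℕ := W0.ncard with hn0def
  set n1 : ℕ := W1.ncard with hn1def
  have hn0pos : 0 < n0 := Set.ncard_pos hfinW0 |>.2 hW0
  have hn1pos : 0 < n1 := Set.ncard_pos hfinW1 |>.2 hW1
  have hn0Q : (0:ℚ) < n0 := by exact_mod_cast hn0pos
  have hn1Q : (0:ℚ) < n1 := by exact_mod_cast hn1pos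
  set FA := hfinA.toFinset with hFAdef
  set FB := hfinB.toFinset with hFBdef
  have hFAX : FA ⊆ X := by
    intro u hu
    exact hWX (hA ((Set.Finite.mem_toFinset hfinA).1 hu)).1
  have hFBX : FB ⊆ X := by
    intro u hu
    exact hWX (hB ((Set.Finite.mem_toFinset hfinB).1 hu)).1
  -- row sums over A
  have hrowA : ∀ u ∈ FA, ∑ v ∈ X, w u v = 1 / (n0 : ℚ) := by
    intro u hu
    have huA : u ∈ A := (Set.Finite.mem_toFinset hfinA).1 hu
    exact hrow u (hA huA).1 (hA huA).2
  have hcardA : FA.card = A.ncard := by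
    rw [Set.ncard_eq_toFinset_card A hfinA]
  have hcardB : FB.card = B.ncard := by
    rw [Set.ncard_eq_toFinset_card B hfinB]
  have hs : ∑ u ∈ FA, ∑ v ∈ X, w u v = (A.ncard : ℚ) * (1 / n0) := by
    rw [Finset.sum_congr rfl hrowA, Finset.sum_const, ← hcardA, nsmul_eq_mul]
  -- split inner sums
  have hsplit : ∀ u ∈ FA, ∑ v ∈ X, w u v = ∑ v ∈ X \ FB, w u v + ∑ v ∈ FB, w u v := by
    intro u _
    rw [Finset.sum_sdiff hFBX]
  have ht : ∑ u ∈ FA, ∑ v ∈ FB, w u v ≤ (B.ncard : ℚ) * (1 / n1) := by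
    rw [Finset.sum_comm]
    have hcolb : ∀ v ∈ FB, ∑ u ∈ FA, w u v ≤ 1 / (n1:ℚ) := by
      intro v hv
      have hvB : v ∈ B := (Set.Finite.mem_toFinset hfinB).1 hv
      calc ∑ u ∈ FA, w u v ≤ ∑ u ∈ X, w u v :=
            Finset.sum_le_sum_of_subset_of_nonneg hFAX (fun u _ _ => hpos u v)
        _ = 1 / n1 := hcol v (hB hvB).1 (hB hvB).2
    calc ∑ v ∈ FB, ∑ u ∈ FA, w u v ≤ ∑ v ∈ FB, (1/(n1:ℚ)) := Finset.sum_le_sum hcolb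
      _ = (B.ncard:ℚ) * (1/n1) := by rw [Finset.sum_const, ← hcardB, nsmul_eq_mul]
  set r : ℚ := ∑ u ∈ FA, ∑ v ∈ X \ FB, w u v with hrdef
  have hr_lower : (A.ncard : ℚ) * (1/n0) - (B.ncard:ℚ) * (1/n1) ≤ r := by
    have hsum : ∑ u ∈ FA, ∑ v ∈ X, w u v = r + ∑ u ∈ FA, ∑ v ∈ FB, w u v := by
      rw [hrdef, ← Finset.sum_add_distrib]
      exact Finset.sum_congr rfl hsplit
    rw [hs] at hsum
    linarith
  set Q := (FA ×ˢ (X \ FB)).filter (fun p => w p.1 p.2 ≠ 0) with hQdef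
  have hrQ : r = ∑ p ∈ Q, w p.1 p.2 := by
    rw [hrdef, ← Finset.sum_product', hQdef]
    exact (Finset.sum_filter_ne_zero _).symm
  have hQmem : ∀ p ∈ Q, p.1 ∈ FA ∧ p.2 ∈ X ∧ p.2 ∉ FB ∧ w p.1 p.2 ≠ 0 := by
    intro p hp
    rw [hQdef, Finset.mem_filter, Finset.mem_product, Finset.mem_sdiff] at hp
    exact ⟨hp.1.1, hp.1.2.1, hp.1.2.2, hp.2⟩
  have hQcard : Q.card ≤ epairs X A (W1 \ B) := by
    have hsub : ↑Q ⊆ pairSet X A (W1 \ B) := by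
      intro p hp
      obtain ⟨h1, h2, h3, h4⟩ := hQmem p ((Finset.mem_coe).1 hp)
      obtain ⟨hadj, huW, hvW, huμ, hvμ⟩ := hsupp p.1 p.2 h4
      refine ⟨(Set.Finite.mem_toFinset hfinA).1 h1, ⟨⟨hvW, hvμ⟩, ?_⟩, hadj⟩
      intro hpB
      exact h3 ((Set.Finite.mem_toFinset hfinB).2 hpB)
    calc Q.card = (↑Q : Set _).ncard := (Set.ncard_coe_finset Q).symm
      _ ≤ _ := Set.ncard_le_ncard hsub (pairSet_finite X A (W1 \ B))
  have hb0 : ∀ p ∈ Q, w p.1 p.2 ≤ 1/(n0:ℚ) := by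
    intro p hp
    obtain ⟨h1, h2, h3, h4⟩ := hQmem p hp
    calc w p.1 p.2 ≤ ∑ v ∈ X, w p.1 v :=
          Finset.single_le_sum (fun v _ => hpos p.1 v) h2
      _ = 1/(n0:ℚ) := hrowA p.1 h1
  have hb1 : ∀ p ∈ Q, w p.1 p.2 ≤ 1/(n1:ℚ) := by
    intro p hp
    obtain ⟨h1, h2, h3, h4⟩ := hQmem p hp
    obtain ⟨hadj, huW, hvW, huμ, hvμ⟩ := hsupp p.1 p.2 h4
    calc w p.1 p.2 ≤ ∑ u ∈ X, w u p.2 :=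
          Finset.single_le_sum (fun u _ => hpos u p.2) hadj.1
      _ = 1/(n1:ℚ) := hcol p.2 hvW hvμ
  have hrub0 : r ≤ (Q.card : ℚ) * (1/(n0:ℚ)) := by
    rw [hrQ]
    calc ∑ p ∈ Q, w p.1 p.2 ≤ Q.card • (1/(n0:ℚ)) := Finset.sum_le_card_nsmul Q _ _ hb0
      _ = (Q.card : ℚ) * (1/(n0:ℚ)) := nsmul_eq_mul _ _
  have hrub1 : r ≤ (Q.card : ℚ) * (1/(n1:ℚ)) := by
    rw [hrQ]
    calc ∑ p ∈ Q, w p.1 p.2 ≤ Q.card • (1/(n1:ℚ)) := Finset.sum_le_card_nsmul Q _ _ hb1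
      _ = (Q.card : ℚ) * (1/(n1:ℚ)) := nsmul_eq_mul _ _
  have hecA : (Q.card : ℚ) ≤ (epairs X A (W1 \ B) : ℚ) := by exact_mod_cast hQcard
  have key0 : (A.ncard:ℚ)*(1/n0) - (B.ncard:ℚ)*(1/n1)
      ≤ (epairs X A (W1 \ B) : ℚ) * (1/n0) :=
    hr_lower.trans (hrub0.trans (by
      apply mul_le_mul_of_nonneg_right hecA
      positivity))
  have key1 : (A.ncard:ℚ)*(1/n0) - (B.ncard:ℚ)*(1/n1)
      ≤ (epairs X A (W1 \ B) : ℚ) * (1/n1) :=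
    hr_lower.trans (hrub1.trans (by
      apply mul_le_mul_of_nonneg_right hecA
      positivity))
  constructor
  · have h := mul_le_mul_of_nonneg_right key0 (mul_pos hn0Q hn1Q).le
    have e1 : ((A.ncard:ℚ)*(1/n0) - (B.ncard:ℚ)*(1/n1)) * ((n0:ℚ)*n1)
        = (A.ncard:ℚ) * n1 - (B.ncard:ℚ) * n0 := by
      field_simp
    have e2 : (epairs X A (W1 \ B) : ℚ) * (1/n0) * ((n0:ℚ)*n1)
        = (epairs X A (W1 \ B) : ℚ) * n1 := by
      field_simp
    rw [e1, e2] at h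
    exact h
  · have h := mul_le_mul_of_nonneg_right key1 (mul_pos hn0Q hn1Q).le
    have e1 : ((A.ncard:ℚ)*(1/n0) - (B.ncard:ℚ)*(1/n1)) * ((n0:ℚ)*n1)
        = (A.ncard:ℚ) * n1 - (B.ncard:ℚ) * n0 := by
      field_simp
    have e2 : (epairs X A (W1 \ B) : ℚ) * (1/n1) * ((n0:ℚ)*n1)
        = (epairs X A (W1 \ B) : ℚ) * n0 := by
      field_simp
    rw [e1, e2] at h
    exact h

lemma wall_key (X : Finset (Fin d → ℝ)) (hX01 : IsZeroOne X)
    (hfwm : HasFractionalWallMatchings X) :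
    ∀ n : ℕ, ∀ W : Set (Fin d → ℝ), W.ncard ≤ n → IsWall X W →
      ∀ S : Set (Fin d → ℝ), S ⊆ W → 2 * S.ncard ≤ W.ncard →
        S.ncard ≤ epairs X S (W \ S) := by
  intro n
  induction n with
  | zero =>
    intro W hWn hW S hSW hS2
    have : S.ncard = 0 := by omega
    rw [this]
    exact Nat.zero_le _
  | succ n ih =>
    intro W hWn hW S hSW hS2
    rcases Nat.eq_zero_or_pos S.ncard with h0 | hSpos
    · rw [h0]; exact Nat.zero_le _
    have hWX : W ⊆ ↑X := wall_subset hW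
    have hfinW : W.Finite := (X.finite_toSet).subset hWX
    have hW2 : 1 < W.ncard := by omega
    obtain ⟨μ, hls⟩ := exists_leastStar hW hW2
    obtain ⟨w, hwpos, hsupp, hrow, hcol⟩ := hfwm W hW μ hls
    set W0 : Set (Fin d → ℝ) := {x ∈ W | x μ = 0} with hW0def
    set W1 : Set (Fin d → ℝ) := {x ∈ W | x μ = 1} with hW1def
    have hW0wall : IsWall X W0 := by simpa using subwall hX01 hW hls.1 false
    have hW1wall : IsWall X W1 := by simpa using subwall hX01 hW hls.1 true
    obtain ⟨he0', he1'⟩ := star_mem_01 hX01 hW hls.1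
    have hW0ne : W0.Nonempty := by obtain ⟨x, hx, hx0⟩ := he0'; exact ⟨x, hx, hx0⟩
    have hW1ne : W1.Nonempty := by obtain ⟨x, hx, hx1⟩ := he1'; exact ⟨x, hx, hx1⟩
    have hW0sub : W0 ⊆ W := fun x hx => hx.1
    have hW1sub : W1 ⊆ W := fun x hx => hx.1
    have hfinW0 : W0.Finite := hfinW.subset hW0sub
    have hfinW1 : W1.Finite := hfinW.subset hW1sub
    have hdisj : Disjoint W0 W1 := by
      rw [Set.disjoint_left]
      rintro x ⟨_, hx0⟩ ⟨_, hx1⟩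
      rw [hx0] at hx1
      exact zero_ne_one hx1
    have hWun : W = W0 ∪ W1 := by
      apply Set.Subset.antisymm
      · intro x hx
        rcases hX01 x (hWX hx) μ with h | h
        · exact Or.inl ⟨hx, h⟩
        · exact Or.inr ⟨hx, h⟩
      · exact Set.union_subset hW0sub hW1sub
    set n0 : ℕ := W0.ncard with hn0def
    set n1 : ℕ := W1.ncard with hn1def
    have hn0pos : 0 < n0 := (Set.ncard_pos hfinW0).2 hW0ne
    have hn1pos : 0 < n1 := (Set.ncard_pos hfinW1).2 hW1ne
    have hWcard : W.ncard = n0 + n1 := by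
      rw [hWun, Set.ncard_union_eq hdisj hfinW0 hfinW1]
    have hn0le : n0 ≤ n := by omega
    have hn1le : n1 ≤ n := by omega
    set A : Set (Fin d → ℝ) := S ∩ W0 with hAdef
    set B : Set (Fin d → ℝ) := S ∩ W1 with hBdef
    have hA : A ⊆ W0 := Set.inter_subset_right
    have hB : B ⊆ W1 := Set.inter_subset_right
    have hfinA : A.Finite := hfinW0.subset hA
    have hfinB : B.Finite := hfinW1.subset hB
    have hSun : S = A ∪ B := by
      rw [hAdef, hBdef, ← Set.inter_union_distrib_left, ← hWun]
      exact (Set.inter_eq_left.2 hSW).symm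
    have hdisjAB : Disjoint A B :=
      (hdisj.mono hA hB)
    set a : ℕ := A.ncard with hadef
    set b : ℕ := B.ncard with hbdef
    have hScard : S.ncard = a + b := by
      rw [hSun, Set.ncard_union_eq hdisjAB hfinA hfinB]
    have haub : a ≤ n0 := Set.ncard_le_ncard hA hfinW0
    have hbub : b ≤ n1 := Set.ncard_le_ncard hB hfinW1
    -- complements inside the parts
    have hW0Acard : (W0 \ A).ncard = n0 - a := Set.ncard_diff hA hfinA
    have hW1Bcard : (W1 \ B).ncard = n1 - b := Set.ncard_diff hB hfinB
    -- e0 bound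
    have he0 : min (a:ℚ) ((n0:ℚ) - a) ≤ (epairs X A (W0 \ A) : ℚ) := by
      rcases le_or_gt (2 * a) n0 with hc | hc
      · have := ih W0 hn0le hW0wall A hA (by omega)
        calc min (a:ℚ) ((n0:ℚ) - a) ≤ (a:ℚ) := min_le_left _ _
          _ ≤ _ := by exact_mod_cast this
      · have h2 : 2 * (W0 \ A).ncard ≤ W0.ncard := by rw [hW0Acard]; omega
        have := ih W0 hn0le hW0wall (W0 \ A) Set.diff_subset h2
        rw [Set.diff_diff_cancel_left hA] at this
        rw [epairs_comm X (W0 \ A) A, hW0Acard] at this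
        have hq : ((n0:ℚ) - a) ≤ (epairs X A (W0 \ A) : ℚ) := by
          have h' : ((n0 - a : ℕ):ℚ) ≤ (epairs X A (W0 \ A) : ℚ) := by exact_mod_cast this
          rwa [Nat.cast_sub haub] at h'
        exact (min_le_right _ _).trans hq
    have he1 : min (b:ℚ) ((n1:ℚ) - b) ≤ (epairs X B (W1 \ B) : ℚ) := by
      rcases le_or_gt (2 * b) n1 with hc | hc
      · have := ih W1 hn1le hW1wall B hB (by omega)
        calc min (b:ℚ) ((n1:ℚ) - b) ≤ (b:ℚ) := min_le_left _ _
          _ ≤ _ := by exact_mod_cast this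
      · have h2 : 2 * (W1 \ B).ncard ≤ W1.ncard := by rw [hW1Bcard]; omega
        have := ih W1 hn1le hW1wall (W1 \ B) Set.diff_subset h2
        rw [Set.diff_diff_cancel_left hB] at this
        rw [epairs_comm X (W1 \ B) B, hW1Bcard] at this
        have hq : ((n1:ℚ) - b) ≤ (epairs X B (W1 \ B) : ℚ) := by
          have h' : ((n1 - b : ℕ):ℚ) ≤ (epairs X B (W1 \ B) : ℚ) := by exact_mod_cast this
          rwa [Nat.cast_sub hbub] at h'
        exact (min_le_right _ _).trans hq
    -- cross bounds
    obtain ⟨hc1, hc2⟩ := cross_bound w hwpos hsupp hrow hcol hWX hW0ne hW1ne hA hB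
    obtain ⟨hc3, hc4⟩ := cross_bound w hwpos hsupp hrow hcol hWX hW0ne hW1ne
      (Set.diff_subset : W0 \ A ⊆ W0) (Set.diff_subset : W1 \ B ⊆ W1)
    rw [Set.diff_diff_cancel_left hB] at hc3 hc4
    have hcast3 : ((W0 \ A).ncard : ℚ) = (n0:ℚ) - a := by
      rw [hW0Acard, Nat.cast_sub haub]
    have hcast4 : ((W1 \ B).ncard : ℚ) = (n1:ℚ) - b := by
      rw [hW1Bcard, Nat.cast_sub hbub]
    rw [hcast3, hcast4] at hc3 hc4
    set ecA : ℕ := epairs X A (W1 \ B) with hecAdef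
    set ecB : ℕ := epairs X (W0 \ A) B with hecBdef
    -- partition of the cut
    have hWS0 : W0 \ S = W0 \ A := by
      rw [hAdef, Set.diff_inter_self_eq_diff]
    have hWS1 : W1 \ S = W1 \ B := by
      rw [hBdef, Set.diff_inter_self_eq_diff]
    have hcut : epairs X S (W \ S) = epairs X A (W0 \ A) + ecA + (ecB + epairs X B (W1 \ B)) := by
      have hWSun : W \ S = (W0 \ A) ∪ (W1 \ B) := by
        rw [hWun, Set.union_diff_distrib, hWS0, hWS1]
      have hdisj' : Disjoint (W0 \ A) (W1 \ B) :=
        hdisj.mono Set.diff_subset Set.diff_subset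
      rw [hWSun, hSun, epairs_union_left hdisjAB,
        epairs_union_right hdisj', epairs_union_right hdisj',
        epairs_comm X B (W0 \ A)]
    -- put everything together over ℚ
    have hn0Q : (1:ℚ) ≤ (n0:ℚ) := by exact_mod_cast hn0pos
    have hn1Q : (1:ℚ) ≤ (n1:ℚ) := by exact_mod_cast hn1pos
    have haQ : (0:ℚ) ≤ (a:ℚ) := Nat.cast_nonneg a
    have hbQ : (0:ℚ) ≤ (b:ℚ) := Nat.cast_nonneg b
    have hsQ : 2 * ((a:ℚ) + b) ≤ (n0:ℚ) + n1 := by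
      have h2 : 2 * (a + b) ≤ n0 + n1 := by omega
      exact_mod_cast h2
    have hecQ : (0:ℚ) ≤ (ecA:ℚ) + (ecB:ℚ) := by positivity
    have hexp0 : ((ecA:ℚ)+(ecB:ℚ))*(n0:ℚ) = (ecA:ℚ)*(n0:ℚ)+(ecB:ℚ)*(n0:ℚ) := by ring
    have hexp1 : ((ecA:ℚ)+(ecB:ℚ))*(n1:ℚ) = (ecA:ℚ)*(n1:ℚ)+(ecB:ℚ)*(n1:ℚ) := by ring
    have hBn0 : (0:ℚ) ≤ (ecB:ℚ)*(n0:ℚ) := by positivity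
    have hBn1 : (0:ℚ) ≤ (ecB:ℚ)*(n1:ℚ) := by positivity
    have hAn0 : (0:ℚ) ≤ (ecA:ℚ)*(n0:ℚ) := by positivity
    have hAn1 : (0:ℚ) ≤ (ecA:ℚ)*(n1:ℚ) := by positivity
    have hq1 : (a:ℚ)*n1 - (b:ℚ)*n0 ≤ ((ecA:ℚ)+(ecB:ℚ))*(n0:ℚ) := by
      linarith [hc2, hBn0, hexp0]
    have hq2 : (a:ℚ)*n1 - (b:ℚ)*n0 ≤ ((ecA:ℚ)+(ecB:ℚ))*(n1:ℚ) := by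
      linarith [hc1, hBn1, hexp1]
    have hq3 : (b:ℚ)*n0 - (a:ℚ)*n1 ≤ ((ecA:ℚ)+(ecB:ℚ))*(n0:ℚ) := by
      linarith [hc4, hAn0, hexp0]
    have hq4 : (b:ℚ)*n0 - (a:ℚ)*n1 ≤ ((ecA:ℚ)+(ecB:ℚ))*(n1:ℚ) := by
      linarith [hc3, hAn1, hexp1]
    have harith : (a:ℚ) + b ≤ (epairs X A (W0 \ A) : ℚ) + (epairs X B (W1 \ B) : ℚ)
        + ((ecA : ℚ) + (ecB : ℚ)) :=
      key_arith (a:ℚ) (b:ℚ) (n0:ℚ) (n1:ℚ) _ _ _ hn0Q hn1Q haQ hbQ hsQ he0 he1 hecQ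
        hq1 hq2 hq3 hq4
    have : (S.ncard : ℚ) ≤ (epairs X S (W \ S) : ℚ) := by
      rw [hScard, hcut]
      push_cast
      linarith
    exact_mod_cast this

lemma isWall_top (X : Finset (Fin d → ℝ)) (hne : X.Nonempty) : IsWall X ↑X := by
  refine ⟨by exact_mod_cast hne, fun _ => none, ?_⟩
  ext x
  simp

theorem expansion_of_hasFractionalWallMatchings' {d : ℕ} (X : Finset (Fin d → ℝ))
    (hX01 : IsZeroOne X) (hcard : 2 ≤ X.card)
    (hfwm : HasFractionalWallMatchings X) :
    1 ≤ edgeExpansion (polytopeGraph X) := by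
  have hXne : X.Nonempty := Finset.card_pos.1 (by omega)
  have hcardV : Fintype.card {x // x ∈ X} = X.card := Fintype.card_coe X
  apply le_csInf
  · obtain ⟨x, hx⟩ := hXne
    refine ⟨_, ⟨{(⟨x, hx⟩ : {x // x ∈ X})}, Set.singleton_nonempty _, ?_, rfl⟩⟩
    rw [Set.ncard_singleton, hcardV]
    omega
  · rintro r ⟨S, hSne, hS2, rfl⟩
    set S' : Set (Fin d → ℝ) := Subtype.val '' S with hS'def
    have hinj : Function.Injective (Subtype.val : {x // x ∈ X} → (Fin d → ℝ)) :=
      Subtype.val_injective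
    have hS'card : S'.ncard = S.ncard := Set.ncard_image_of_injective S hinj
    have hS'X : S' ⊆ ↑X := by
      rintro x ⟨y, hy, rfl⟩
      exact y.2
    have hXcard : (↑X : Set (Fin d → ℝ)).ncard = X.card := Set.ncard_coe_finset X
    have hkey := wall_key X hX01 hfwm ((↑X : Set (Fin d → ℝ)).ncard) ↑X le_rfl
      (isWall_top X hXne) S' hS'X (by rw [hS'card, hXcard, ← hcardV]; exact hS2)
    -- identify the cut cardinalities
    have hcut : cutCard (polytopeGraph X) S = epairs X S' ((↑X : Set (Fin d → ℝ)) \ S') := by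
      unfold cutCard epairs
      have himg : pairSet X S' ((↑X : Set (Fin d → ℝ)) \ S')
          = (fun p : {x // x ∈ X} × {x // x ∈ X} => ((p.1 : Fin d → ℝ), (p.2 : Fin d → ℝ)))
            '' {p | p.1 ∈ S ∧ p.2 ∉ S ∧ (polytopeGraph X).Adj p.1 p.2} := by
        ext ⟨u, v⟩
        constructor
        · rintro ⟨huS, ⟨hvX, hvS⟩, hadj⟩
          obtain ⟨us, husS, rfl⟩ := huS
          refine ⟨(us, ⟨v, hvX⟩), ⟨husS, ?_, hadj⟩, rfl⟩
          intro hvmem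
          exact hvS ⟨⟨v, hvX⟩, hvmem, rfl⟩
        · rintro ⟨⟨p1, p2⟩, ⟨h1, h2, h3⟩, heq⟩
          obtain ⟨e1, e2⟩ := Prod.ext_iff.1 heq
          simp only at e1 e2
          subst e1; subst e2
          refine ⟨⟨p1, h1, rfl⟩, ⟨p2.2, ?_⟩, h3⟩
          rintro ⟨q, hqS, hq⟩
          rw [hinj hq] at hqS
          exact h2 hqS
      rw [himg, Set.ncard_image_of_injective]
      intro p q hpq
      obtain ⟨e1, e2⟩ := Prod.ext_iff.1 hpq
      exact Prod.ext (hinj e1) (hinj e2)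
    have hmain : S.ncard ≤ cutCard (polytopeGraph X) S := by
      rw [hcut, ← hS'card]
      exact hkey
    have hSpos : 0 < S.ncard := (Set.ncard_pos S.toFinite).2 hSne
    rw [le_div_iff₀ (by exact_mod_cast hSpos), one_mul]
    exact_mod_cast hmain

end Aux

/-- If `P ⊆ ℝ^d` is a 0/1-polytope with at least two vertices
that has fractional wall-matchings, then `h(G(P)) ≥ 1`. -/
theorem expansion_of_hasFractionalWallMatchings {d : ℕ} (X : Finset (Fin d → ℝ))
    (hX01 : IsZeroOne X) (hcard : 2 ≤ X.card)
    (hfwm : HasFractionalWallMatchings X) :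
    1 ≤ edgeExpansion (polytopeGraph X) :=
  expansion_of_hasFractionalWallMatchings' X hX01 hcard hfwm
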